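/- Every subset X of 2^ω of cardinality continuum contains a subset X' of cardinality continuum which is Marczewski null. Consequently there are no 'generalized Luzin sets' for the Marczewski ideal s₀. -/

import Mathlib

open Cardinal

abbrev Cantor : Type := ℕ → Bool

def cAdd (x y : Cantor) : Cantor := fun n => xor (x n) (y n)

def setAdd (X Y : Set Cantor) : Set Cantor := Set.image2 cAdd X Y

def IsTree (p : Set (List Bool)) : Prop := ∀ σ ∈ p, ∀ τ : List Bool, τ <+: σ → τ ∈ p

def Splits (p : Set (List Bool)) (σ : List Bool) : Prop :=
  σ ++ [false] ∈ p ∧ σ ++ [true] ∈ p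

def PerfTree (p : Set (List Bool)) : Prop :=
  p.Nonempty ∧ IsTree p ∧ ∀ σ ∈ p, ∃ τ ∈ p, σ <+: τ ∧ Splits p τ

def seg (x : Cantor) (n : ℕ) : List Bool := List.ofFn (fun i : Fin n => x i)

def body (p : Set (List Bool)) : Set Cantor := { x | ∀ n, seg x n ∈ p }

def shiftNode (t : Cantor) (σ : List Bool) : List Bool :=
  σ.mapIdx fun i b => xor b (t i)

def treeAdd (p : Set (List Bool)) (t : Cantor) : Set (List Bool) := shiftNode t '' p

def SkewT (p : Set (List Bool)) : Prop :=
  ∀ σ ∈ p, ∀ τ ∈ p, Splits p σ → Splits p τ → σ.length = τ.length → σ = τ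

def PerfectSet (P : Set Cantor) : Prop := Perfect P ∧ P.Nonempty

def MarczewskiNull (Y : Set Cantor) : Prop :=
  ∀ P : Set Cantor, PerfectSet P → ∃ Q, PerfectSet Q ∧ Q ⊆ P ∧ Q ∩ Y = ∅

def MarczewskiNullT (Y : Set Cantor) : Prop :=
  ∀ p, PerfTree p → ∃ q, PerfTree q ∧ q ⊆ p ∧ body q ∩ Y = ∅

def Shiftable (X : Set Cantor) : Prop :=
  ∀ Y, MarczewskiNull Y → setAdd X Y ≠ Set.univ

open Set Filter Topology Function

noncomputable section

lemma mk_cantor : #Cantor = 𝔠 := by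
  simp [Cantor, Cardinal.mk_arrow]

lemma seg_apply (x : Cantor) {n i : ℕ} (h : i < n) :
    (seg x n)[i]'(by simpa [seg] using h) = x i := by
  simp [seg]

lemma seg_eq_imp {x y : Cantor} {n : ℕ} (h : seg x n = seg y n) {i : ℕ} (hi : i < n) :
    x i = y i := by
  rw [← seg_apply x hi, ← seg_apply y hi]
  exact List.getElem_of_eq h _

lemma seg_length (x : Cantor) (n : ℕ) : (seg x n).length = n := by simp [seg]

lemma mem_of_closed_approx {C : Set Cantor} (hC : IsClosed C) {x : Cantor}
    (h : ∀ n, ∃ y ∈ C, seg y n = seg x n) : x ∈ C := by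
  choose y hyC hseg using h
  have htend : Tendsto y atTop (𝓝 x) := by
    rw [tendsto_pi_nhds]
    intro i
    refine tendsto_const_nhds.congr' ?_
    filter_upwards [eventually_ge_atTop (i+1)] with n hn
    exact (seg_eq_imp (hseg n) (by omega)).symm
  exact hC.mem_of_tendsto htend (Eventually.of_forall hyC)

/-- trace of a set on finite strings -/
def trace (C : Set Cantor) : Set (List Bool) := {σ | ∃ x ∈ C, ∃ n, seg x n = σ}

lemma trace_injOn : ∀ C D : Set Cantor, IsClosed C → IsClosed D → trace C = trace D → C = D := by
  have key : ∀ C D : Set Cantor, IsClosed D → trace C = trace D → C ⊆ D := by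
    intro C D hD htr x hx
    apply mem_of_closed_approx hD
    intro n
    have : seg x n ∈ trace D := by
      rw [← htr]; exact ⟨x, hx, n, rfl⟩
    obtain ⟨y, hyD, m, hm⟩ := this
    have hlen : m = n := by
      have := congrArg List.length hm
      simpa [seg_length] using this
    subst hlen
    exact ⟨y, hyD, hm⟩
  intro C D hC hD htr
  exact subset_antisymm (key C D hD htr) (key D C hC htr.symm)

/-- the basic disjoint fibers of Cantor space -/
def Fib (t : Cantor) : Set Cantor := {x | ∀ n, x (2*n+1) = t n}

lemma fib_closed (t : Cantor) : IsClosed (Fib t) := by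
  have : Fib t = ⋂ n, (fun x : Cantor => x (2*n+1)) ⁻¹' {t n} := by
    ext x; simp [Fib]
  rw [this]
  exact isClosed_iInter fun n => (isClosed_singleton).preimage (continuous_apply _)

lemma fib_nonempty (t : Cantor) : (Fib t).Nonempty := by
  refine ⟨fun i => if i % 2 = 1 then t (i/2) else false, fun n => ?_⟩
  have h1 : (2*n+1) % 2 = 1 := by omega
  have h2 : (2*n+1)/2 = n := by omega
  simp [h1, h2]

lemma fib_disjoint {t s : Cantor} (h : t ≠ s) : Fib t ∩ Fib s = ∅ := by
  ext x
  simp only [mem_inter_iff, Fib, mem_setOf_eq, mem_empty_iff_false, iff_false, not_and]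
  intro h1 h2
  apply h
  funext n
  rw [← h1 n, ← h2 n]

lemma fib_perfect (t : Cantor) : Perfect (Fib t) := by
  refine ⟨fib_closed t, fun x hx => ?_⟩
  rw [accPt_iff_nhds]
  intro U hU
  set z : ℕ → Cantor := fun m => Function.update x (2*m) (!(x (2*m))) with hz
  have htend : Tendsto z atTop (𝓝 x) := by
    rw [tendsto_pi_nhds]
    intro i
    refine tendsto_const_nhds.congr' ?_
    filter_upwards [eventually_ge_atTop (i+1)] with m hm
    have : i ≠ 2*m := by omega
    exact (Function.update_of_ne this _ _).symm
  have hev : ∀ᶠ m in atTop, z m ∈ U := htend.eventually_mem hU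
  obtain ⟨m, hm⟩ := hev.exists
  refine ⟨z m, ⟨hm, fun n => ?_⟩, fun hcon => ?_⟩
  · have : 2*n+1 ≠ 2*m := by omega
    rw [hz]
    simp only [Function.update_of_ne this]
    exact hx n
  · have : z m (2*m) = x (2*m) := by rw [hcon]
    simp [hz] at this

lemma perfect_image {f : Cantor → Cantor} (hf : Continuous f) (hinj : Function.Injective f)
    {F : Set Cantor} (hF : Perfect F) : Perfect (f '' F) := by
  constructor
  · exact ((hF.closed.isCompact).image hf).isClosed
  · rintro y ⟨x, hxF, rfl⟩
    rw [accPt_iff_nhds]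
    intro U hU
    have hpre : f ⁻¹' U ∈ 𝓝 x := hf.continuousAt.preimage_mem_nhds hU
    obtain ⟨z, ⟨hzU, hzF⟩, hzx⟩ := (accPt_iff_nhds.1 (hF.acc x hxF)) _ hpre
    exact ⟨f z, ⟨hzU, ⟨z, hzF, rfl⟩⟩, fun h => hzx (hinj h)⟩

lemma perfect_embed {P : Set Cantor} (hP : PerfectSet P) :
    ∃ f : Cantor → Cantor, range f ⊆ P ∧ Continuous f ∧ Function.Injective f := by
  letI := TopologicalSpace.upgradeIsCompletelyMetrizable Cantor
  exact hP.1.exists_nat_bool_injection hP.2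

/-- a family of 𝔠 pairwise disjoint perfect subsets of any perfect set -/
lemma exists_fibers {P : Set Cantor} (hP : PerfectSet P) :
    ∃ F : Cantor → Set Cantor, (∀ t, PerfectSet (F t)) ∧ (∀ t, F t ⊆ P) ∧
      (∀ t s, t ≠ s → F t ∩ F s = ∅) := by
  obtain ⟨f, hfP, hfc, hfi⟩ := perfect_embed hP
  refine ⟨fun t => f '' Fib t, fun t => ⟨perfect_image hfc hfi (fib_perfect t),
    (fib_nonempty t).image f⟩, fun t => ?_, fun t s hts => ?_⟩
  · rintro y ⟨x, -, rfl⟩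
    exact hfP ⟨x, rfl⟩
  · ext y
    simp only [mem_inter_iff, mem_image, mem_empty_iff_false, iff_false, not_and]
    rintro ⟨x, hx, rfl⟩ ⟨x', hx', hxx⟩
    rcases hfi hxx.symm with rfl
    have : x ∈ Fib t ∩ Fib s := ⟨hx, hx'⟩
    rw [fib_disjoint hts] at this
    exact this

/-- clean piece lemma -/
lemma clean_piece {P : Set Cantor} (hP : PerfectSet P) (S : Set Cantor) (hS : #S < 𝔠) :
    ∃ Q, PerfectSet Q ∧ Q ⊆ P ∧ Q ∩ S = ∅ := by
  obtain ⟨F, hFperf, hFsub, hFdisj⟩ := exists_fibers hP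
  set T : Set Cantor := {t | (F t ∩ S).Nonempty} with hT
  have hTS : #T ≤ #S := by
    have : ∀ t : T, ∃ s : S, (s : Cantor) ∈ F t := by
      rintro ⟨t, ht⟩
      obtain ⟨z, hz1, hz2⟩ := ht
      exact ⟨⟨z, hz2⟩, hz1⟩
    choose g hg using this
    have hginj : Function.Injective g := by
      rintro t1 t2 h
      have h1 := hg t1
      have h2 := hg t2
      rw [h] at h1
      by_contra hne
      have hne' : (t1 : Cantor) ≠ (t2 : Cantor) := fun hc => hne (Subtype.ext hc)
      have : (g t2 : Cantor) ∈ F t1 ∩ F t2 := ⟨h1, h2⟩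
      rw [hFdisj _ _ hne'] at this
      exact this
    exact Cardinal.mk_le_of_injective hginj
  have hTne : T ≠ Set.univ := by
    intro hu
    have h1 : #T = 𝔠 := by rw [hu, Cardinal.mk_univ, mk_cantor]
    exact absurd (h1 ▸ (hTS.trans_lt hS)) (lt_irrefl _)
  obtain ⟨t, ht⟩ : ∃ t, t ∉ T := by
    by_contra hc
    push_neg at hc
    exact hTne (eq_univ_of_forall hc)
  refine ⟨F t, hFperf t, hFsub t, ?_⟩
  rw [hT] at ht
  simpa [Set.not_nonempty_iff_eq_empty] using ht

lemma case_two {X P : Set Cantor} (hP : PerfectSet P)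
    (hbig : ∀ Q, PerfectSet Q → Q ⊆ P → #(X ∩ Q : Set Cantor) = 𝔠) :
    ∃ X' ⊆ X, #X' = 𝔠 ∧ MarczewskiNull X' := by
  obtain ⟨F, hFperf, hFsub, hFdisj⟩ := exists_fibers hP
  set 𝒢 := {Q : Set Cantor // PerfectSet Q ∧ ∀ t, (Q ∩ F t).Countable} with h𝒢def
  -- cardinality of 𝒢
  have h𝒢 : #𝒢 ≤ 𝔠 := by
    have hinj : Function.Injective (fun G : 𝒢 => trace G.1) := by
      rintro G1 G2 h
      exact Subtype.ext (trace_injOn _ _ G1.2.1.1.closed G2.2.1.1.closed h)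
    calc #𝒢 ≤ #(Set (List Bool)) := Cardinal.mk_le_of_injective hinj
      _ = 2 ^ #(List Bool) := Cardinal.mk_set
      _ = 2 ^ ℵ₀ := by rw [Cardinal.mk_eq_aleph0 (List Bool)]
      _ = 𝔠 := Cardinal.two_power_aleph0
  obtain ⟨j⟩ : Nonempty (𝒢 ↪ Cantor) :=
    (Cardinal.le_def _ _).1 (by rw [mk_cantor]; exact h𝒢)
  obtain ⟨r, wo, hr⟩ := Cardinal.ord_eq Cantor
  letI : IsWellOrder Cantor r := wo
  have hproper : ∀ t : Cantor, #{s : Cantor | r s t} < 𝔠 := by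
    intro t
    have h1 := Cardinal.card_typein_lt (r := r) t hr
    rw [mk_cantor] at h1
    have h2 : #{s : Cantor | r s t} = (Ordinal.typein r t).card := Ordinal.card_typein t
    rw [h2]
    exact h1
  have hseg : ∀ t : Cantor, #{s : Cantor | ¬ r t s} < 𝔠 := by
    intro t
    have hsub : {s : Cantor | ¬ r t s} ⊆ insert t {s : Cantor | r s t} := by
      intro s hs
      rcases trichotomous_of r s t with h | h | h
      · exact Set.mem_insert_iff.2 (Or.inr h)
      · exact Set.mem_insert_iff.2 (Or.inl h)
      · exact absurd h hs
    calc #{s : Cantor | ¬ r t s} ≤ #(insert t {s : Cantor | r s t} : Set Cantor) :=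
          Cardinal.mk_le_mk_of_subset hsub
      _ ≤ #{s : Cantor | r s t} + 1 := Cardinal.mk_insert_le
      _ < 𝔠 := Cardinal.add_lt_of_lt aleph0_le_continuum (hproper t)
          (one_lt_aleph0.trans aleph0_lt_continuum)
  -- avoidance sets
  set U : Cantor → Set Cantor := fun t => ⋃ G : {G : 𝒢 // ¬ r t (j G)}, (G.1.1 : Set Cantor)
    with hUdef
  have hUsmall : ∀ t, #(F t ∩ U t : Set Cantor) < 𝔠 := by
    intro t
    have heq : F t ∩ U t = ⋃ G : {G : 𝒢 // ¬ r t (j G)}, (F t ∩ G.1.1) := by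
      rw [hUdef, inter_iUnion]
    rw [heq]
    have hIdx : #{G : 𝒢 // ¬ r t (j G)} < 𝔠 := by
      have : Function.Injective (fun G : {G : 𝒢 // ¬ r t (j G)} =>
          (⟨j G.1, G.2⟩ : {s : Cantor | ¬ r t s})) := by
        rintro G1 G2 h
        exact Subtype.ext (j.injective (congrArg Subtype.val h))
      exact (Cardinal.mk_le_of_injective this).trans_lt (hseg t)
    calc #(⋃ G : {G : 𝒢 // ¬ r t (j G)}, (F t ∩ G.1.1) : Set Cantor)
        ≤ Cardinal.sum (fun G : {G : 𝒢 // ¬ r t (j G)} => #(F t ∩ G.1.1 : Set Cantor)) :=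
          Cardinal.mk_iUnion_le_sum_mk
      _ ≤ Cardinal.sum (fun _ : {G : 𝒢 // ¬ r t (j G)} => ℵ₀) := by
          apply Cardinal.sum_le_sum
          intro G
          have hcnt : (F t ∩ G.1.1).Countable := by
            have := G.1.2.2 t
            rwa [inter_comm] at this
          exact hcnt.le_aleph0
      _ = #{G : 𝒢 // ¬ r t (j G)} * ℵ₀ := Cardinal.sum_const' _ _
      _ < 𝔠 := Cardinal.mul_lt_of_lt aleph0_le_continuum hIdx aleph0_lt_continuum
  -- choice of points
  have hchoice : ∀ t, ((X ∩ F t) \ U t).Nonempty := by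
    intro t
    by_contra h
    rw [not_nonempty_iff_eq_empty, diff_eq_empty] at h
    have h2 : X ∩ F t ⊆ F t ∩ U t := fun z hz => ⟨hz.2, h hz⟩
    have h3 := (Cardinal.mk_le_mk_of_subset h2).trans_lt (hUsmall t)
    rw [hbig (F t) (hFperf t) (hFsub t)] at h3
    exact absurd h3 (lt_irrefl _)
  choose x hx using hchoice
  have hxX : ∀ t, x t ∈ X := fun t => (hx t).1.1
  have hxF : ∀ t, x t ∈ F t := fun t => (hx t).1.2
  have hxU : ∀ t, x t ∉ U t := fun t => (hx t).2
  have hxinj : Function.Injective x := by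
    intro s t h
    by_contra hne
    have : x s ∈ F s ∩ F t := ⟨hxF s, h ▸ hxF t⟩
    rw [hFdisj _ _ hne] at this
    exact this
  have hfib_unique : ∀ s t : Cantor, x s ∈ F t → s = t := by
    intro s t hst
    by_contra hne
    have : x s ∈ F s ∩ F t := ⟨hxF s, hst⟩
    rw [hFdisj _ _ hne] at this
    exact this
  refine ⟨range x, ?_, ?_, ?_⟩
  · rintro z ⟨s, rfl⟩; exact hxX s
  · rw [Cardinal.mk_range_eq x hxinj, mk_cantor]
  · intro Q hQ
    by_cases hc : ∀ t, (Q ∩ F t).Countable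
    · set G : 𝒢 := ⟨Q, hQ, hc⟩ with hGdef
      have hsmall : #(Q ∩ range x : Set Cantor) < 𝔠 := by
        have hsub : Q ∩ range x ⊆ x '' {s : Cantor | r s (j G)} := by
          rintro z ⟨hzQ, s, rfl⟩
          refine ⟨s, ?_, rfl⟩
          by_contra hns
          exact hxU s (mem_iUnion.2 ⟨⟨G, hns⟩, hzQ⟩)
        calc #(Q ∩ range x : Set Cantor) ≤ #(x '' {s : Cantor | r s (j G)} : Set Cantor) :=
              Cardinal.mk_le_mk_of_subset hsub
          _ ≤ #{s : Cantor | r s (j G)} := Cardinal.mk_image_le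
          _ < 𝔠 := hproper _
      obtain ⟨R, hR, hRQ, hRdisj⟩ := clean_piece hQ (Q ∩ range x) hsmall
      refine ⟨R, hR, hRQ, ?_⟩
      rw [eq_empty_iff_forall_notMem]
      rintro z ⟨hzR, hzX⟩
      rw [eq_empty_iff_forall_notMem] at hRdisj
      exact hRdisj z ⟨hzR, hRQ hzR, hzX⟩
    · push_neg at hc
      obtain ⟨t, ht⟩ := hc
      have hcl : IsClosed (Q ∩ F t) := hQ.1.closed.inter (hFperf t).1.closed
      obtain ⟨D, hD, hDne, hDsub⟩ :=
        exists_perfect_nonempty_of_isClosed_of_not_countable hcl ht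
      have hsmall : #(D ∩ range x : Set Cantor) < 𝔠 := by
        have hsub : D ∩ range x ⊆ {x t} := by
          rintro z ⟨hzD, s, rfl⟩
          have : x s ∈ F t := (hDsub hzD).2
          rw [hfib_unique s t this]
          exact rfl
        calc #(D ∩ range x : Set Cantor) ≤ #({x t} : Set Cantor) :=
              Cardinal.mk_le_mk_of_subset hsub
          _ = 1 := Cardinal.mk_singleton _
          _ < 𝔠 := one_lt_aleph0.trans aleph0_lt_continuum
      obtain ⟨R, hR, hRD, hRdisj⟩ := clean_piece ⟨hD, hDne⟩ (D ∩ range x) hsmall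
      refine ⟨R, hR, hRD.trans ((hDsub.trans inter_subset_left)), ?_⟩
      rw [eq_empty_iff_forall_notMem]
      rintro z ⟨hzR, hzX⟩
      rw [eq_empty_iff_forall_notMem] at hRdisj
      exact hRdisj z ⟨hzR, hRD hzR, hzX⟩

theorem stmt8 (X : Set Cantor) (hX : #X = Cardinal.continuum) :
    ∃ X' ⊆ X, #X' = Cardinal.continuum ∧ MarczewskiNull X' := by
  by_cases h : ∀ P, PerfectSet P → ∃ Q, PerfectSet Q ∧ Q ⊆ P ∧ #(X ∩ Q : Set Cantor) < 𝔠
  · refine ⟨X, subset_rfl, hX, ?_⟩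
    intro P hP
    obtain ⟨Q, hQ, hQP, hsmall⟩ := h P hP
    obtain ⟨R, hR, hRQ, hRdisj⟩ := clean_piece hQ (X ∩ Q) hsmall
    refine ⟨R, hR, hRQ.trans hQP, ?_⟩
    rw [eq_empty_iff_forall_notMem]
    rintro z ⟨hzR, hzX⟩
    rw [eq_empty_iff_forall_notMem] at hRdisj
    exact hRdisj z ⟨hzR, hzX, hRQ hzR⟩
  · push_neg at h
    obtain ⟨P, hP, hbig0⟩ := h
    have hbig : ∀ Q, PerfectSet Q → Q ⊆ P → #(X ∩ Q : Set Cantor) = 𝔠 := by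
      intro Q hQ hQP
      have hle : #(X ∩ Q : Set Cantor) ≤ 𝔠 := by
        calc #(X ∩ Q : Set Cantor) ≤ #(Set.univ : Set Cantor) :=
              Cardinal.mk_le_mk_of_subset (Set.subset_univ _)
          _ = #Cantor := Cardinal.mk_univ
          _ = 𝔠 := mk_cantor
      exact le_antisymm hle (hbig0 Q hQ hQP)
    exact case_two hP hbig

end
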